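/- Suppose the symmetric Assumption 2.1(i)–(ii) holds and let η ∈ [−1,1]. Set τ₁(η) = (A(1)+B(1))(1−η) + (C(1)+D(1))(1+η) and define φ(z) = B(z)(1−η) + C(z)(1+η) − z^K·τ₁(η) for |z| ≤ 1. Then φ has no zeros on the unit circle |z| = 1, and φ has exactly K zeros in the open unit disc counted with multiplicity: there exist ζ_1,…,ζ_K ∈ ℂ with |ζ_l| < 1 and a function u analytic and zero-free on the open unit disc such that φ(z) = u(z)·Π_{l=1}^{K}(z−ζ_l) for all |z| < 1. -/

import Mathlib

open scoped BigOperators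

/-- `GC a z = Σ_{m=0}^∞ a_m z^m`, encoding `A(z) = Σ_{k=-∞}^K a_k z^{K-k}`
via the reindexing `m = K - k`. -/
noncomputable def GC (a : ℕ → ℝ) (z : ℂ) : ℂ := ∑' m : ℕ, (a m : ℂ) * z ^ m

/-- `A(1)` (a real number). -/
noncomputable def Gone (a : ℕ → ℝ) : ℝ := ∑' m : ℕ, a m

/-- `A'(1) = Σ_{k=-∞}^K (K-k) a_k`. -/
noncomputable def Gder (a : ℕ → ℝ) : ℝ := ∑' m : ℕ, (m : ℝ) * a m

/-- `T = A(1)+B(1)+C(1)+D(1)`. -/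
noncomputable def Tval (a b cc d : ℕ → ℝ) : ℝ := Gone a + Gone b + Gone cc + Gone d

/-- `F(z) = z^K (A(1)+B(1)-C(1)-D(1)) - B(z) + C(z)`. -/
noncomputable def FC (K : ℕ) (a b cc d : ℕ → ℝ) (z : ℂ) : ℂ :=
  z ^ K * ((Gone a + Gone b - Gone cc - Gone d : ℝ) : ℂ) - GC b z + GC cc z

/-- `τ₁(η) = (A(1)+B(1))(1-η) + (C(1)+D(1))(1+η)`. -/
noncomputable def tau1 (a b cc d : ℕ → ℝ) (η : ℝ) : ℝ :=
  (Gone a + Gone b) * (1 - η) + (Gone cc + Gone d) * (1 + η)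

/-- `φ(z) = B(z)(1-η) + C(z)(1+η) - z^K τ₁(η)`. -/
noncomputable def phi (K : ℕ) (a b cc d : ℕ → ℝ) (η : ℝ) (z : ℂ) : ℂ :=
  GC b z * ((1 - η : ℝ) : ℂ) + GC cc z * ((1 + η : ℝ) : ℂ)
    - z ^ K * (tau1 a b cc d η : ℝ)

open Metric Set Complex Filter Topology
namespace Stmt8Aux




lemma summable_coef {e : ℕ → ℝ} (he : Summable e) {z : ℂ} (hz : ‖z‖ ≤ 1) :
    Summable (fun m => (e m : ℂ) * z ^ m) := by
  apply Summable.of_norm_bounded he.abs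
  intro m
  rw [norm_mul, norm_pow]
  calc ‖(e m : ℂ)‖ * ‖z‖ ^ m ≤ ‖(e m : ℂ)‖ * 1 :=
        mul_le_mul_of_nonneg_left (pow_le_one₀ (norm_nonneg z) hz) (norm_nonneg _)
    _ = |e m| := by rw [mul_one, Complex.norm_real, Real.norm_eq_abs]

lemma norm_G_le {e : ℕ → ℝ} (he : Summable e) (hpos : ∀ m, 0 ≤ e m) {z : ℂ} (hz : ‖z‖ ≤ 1) :
    ‖∑' m, (e m : ℂ) * z ^ m‖ ≤ ∑' m, e m := by
  have hb : ∀ m, ‖(e m : ℂ) * z ^ m‖ ≤ e m := by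
    intro m
    rw [norm_mul, norm_pow, Complex.norm_real, Real.norm_eq_abs, _root_.abs_of_nonneg (hpos m)]
    calc e m * ‖z‖ ^ m ≤ e m * 1 :=
          mul_le_mul_of_nonneg_left (pow_le_one₀ (norm_nonneg z) hz) (hpos m)
      _ = e m := mul_one _
  have hs : Summable fun m => ‖(e m : ℂ) * z ^ m‖ :=
    Summable.of_nonneg_of_le (fun _ => norm_nonneg _) hb he
  calc ‖∑' m, (e m : ℂ) * z ^ m‖ ≤ ∑' m, ‖(e m : ℂ) * z ^ m‖ := norm_tsum_le_tsum_norm hs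
    _ ≤ ∑' m, e m := Summable.tsum_le_tsum hb hs he

lemma analyticG {e : ℕ → ℝ} (he : Summable e) :
    AnalyticOnNhd ℂ (fun z => ∑' m, (e m : ℂ) * z ^ m) (ball (0 : ℂ) 1) := by
  apply DifferentiableOn.analyticOnNhd ?_ isOpen_ball
  have H : TendstoUniformlyOn (fun (t : Finset ℕ) z => ∑ m ∈ t, (e m : ℂ) * z ^ m)
      (fun z => ∑' m, (e m : ℂ) * z ^ m) atTop (ball (0 : ℂ) 1) := by
    apply tendstoUniformlyOn_tsum he.abs
    intro n x hx
    have hx1 : ‖x‖ ≤ 1 := le_of_lt (by simpa using hx)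
    rw [norm_mul, norm_pow]
    calc ‖(e n : ℂ)‖ * ‖x‖ ^ n ≤ ‖(e n : ℂ)‖ * 1 :=
          mul_le_mul_of_nonneg_left (pow_le_one₀ (norm_nonneg x) hx1) (norm_nonneg _)
      _ = |e n| := by rw [mul_one, Complex.norm_real, Real.norm_eq_abs]
  refine H.tendstoLocallyUniformlyOn.differentiableOn (Eventually.of_forall fun t => ?_) isOpen_ball
  apply Differentiable.differentiableOn
  exact Differentiable.fun_sum fun i _ => (differentiable_const _).mul (differentiable_pow i)

lemma factor_out {f : ℂ → ℂ} (hf : AnalyticOnNhd ℂ f (ball (0 : ℂ) 1)) {ζ : ℂ}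
    (hζ : ζ ∈ ball (0 : ℂ) 1) (h0 : f ζ = 0) :
    ∃ f₁ : ℂ → ℂ, AnalyticOnNhd ℂ f₁ (ball (0 : ℂ) 1) ∧ ∀ z, f z = (z - ζ) * f₁ z := by
  refine ⟨dslope f ζ, ?_, fun z => ?_⟩
  · intro z hz
    rcases eq_or_ne z ζ with rfl | hne
    · obtain ⟨p, hp⟩ := hf z hz
      exact hp.has_fpower_series_dslope_fslope.analyticAt
    · have h1 : AnalyticAt ℂ (fun w => (w - ζ)⁻¹ * (f w - f ζ)) z :=
        ((analyticAt_id.sub analyticAt_const).inv (sub_ne_zero.2 hne)).mul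
          ((hf z hz).sub analyticAt_const)
      apply h1.congr
      filter_upwards [eventually_ne_nhds hne] with w hw
      rw [dslope_of_ne _ hw, slope_def_field, div_eq_inv_mul]
  · have h := sub_smul_dslope f ζ z
    rw [h0, sub_zero] at h
    rw [← h, smul_eq_mul]

lemma order_ne_top {f : ℂ → ℂ} (hf : AnalyticOnNhd ℂ f (ball (0 : ℂ) 1))
    {z₀ : ℂ} (hz₀ : z₀ ∈ ball (0 : ℂ) 1) (hfz₀ : f z₀ ≠ 0)
    {w : ℂ} (hw : w ∈ ball (0 : ℂ) 1) : analyticOrderAt f w ≠ ⊤ := by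
  intro htop
  rw [analyticOrderAt_eq_top] at htop
  have hfreq : ∃ᶠ z in 𝓝[≠] w, f z = 0 :=
    ((htop.filter_mono nhdsWithin_le_nhds).frequently)
  exact hfz₀ (hf.eqOn_zero_of_preconnected_of_frequently_eq_zero
    (convex_ball (0:ℂ) 1).isPreconnected hw hfreq hz₀)

open Classical in
noncomputable def ordN (f : ℂ → ℂ) (z : ℂ) : ℕ :=
  if h : AnalyticAt ℂ f z then (analyticOrderAt f z).toNat else 0

lemma ordN_eq_zero {f : ℂ → ℂ} {z : ℂ} (hf : AnalyticAt ℂ f z) (h : f z ≠ 0) :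
    ordN f z = 0 := by
  have h0 : analyticOrderAt f z = ((0 : ℕ) : ℕ∞) := by
    rw [hf.analyticOrderAt_eq_natCast]
    exact ⟨f, hf, h, by filter_upwards with w; simp⟩
  rw [ordN, dif_pos hf, h0]
  rfl

lemma ordN_pos {f : ℂ → ℂ} {z : ℂ} (hf : AnalyticAt ℂ f z) (h : f z = 0)
    (hfin : analyticOrderAt f z ≠ ⊤) : 1 ≤ ordN f z := by
  rw [ordN, dif_pos hf]
  by_contra hn
  have h0 : (analyticOrderAt f z).toNat = 0 := by omega
  have : analyticOrderAt f z = ((0 : ℕ) : ℕ∞) := by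
    rw [← h0, ENat.coe_toNat hfin]
  obtain ⟨g, hg, hgne, hgev⟩ := (hf.analyticOrderAt_eq_natCast (n := 0)).mp this
  have := hgev.self_of_nhds
  simp only [pow_zero, one_smul] at this
  exact hgne (this ▸ h)




lemma analyticAt_of_eq {f f₁ : ℂ → ℂ} {ζ w : ℂ} (hf₁ : AnalyticAt ℂ f₁ w)
    (hEq : ∀ z, f z = (z - ζ) * f₁ z) : AnalyticAt ℂ f w := by
  have h : AnalyticAt ℂ (fun z => (z - ζ) * f₁ z) w :=
    (analyticAt_id.sub analyticAt_const).mul hf₁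
  exact h.congr (by filter_upwards with x; rw [hEq])

lemma ordN_mul_self {f f₁ : ℂ → ℂ} {ζ : ℂ} (hf₁ : AnalyticAt ℂ f₁ ζ)
    (hEq : ∀ z, f z = (z - ζ) * f₁ z) (hfin : analyticOrderAt f₁ ζ ≠ ⊤) :
    ordN f ζ = ordN f₁ ζ + 1 := by
  set n := (analyticOrderAt f₁ ζ).toNat with hndef
  have hn : analyticOrderAt f₁ ζ = (n : ℕ∞) := (ENat.coe_toNat hfin).symm
  obtain ⟨g, hg, hgne, hgev⟩ := (hf₁.analyticOrderAt_eq_natCast (n := n)).mp hn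
  have hfA : AnalyticAt ℂ f ζ := analyticAt_of_eq hf₁ hEq
  have hford : analyticOrderAt f ζ = ((n + 1 : ℕ) : ℕ∞) := by
    rw [hfA.analyticOrderAt_eq_natCast]
    refine ⟨g, hg, hgne, ?_⟩
    filter_upwards [hgev] with w hw
    rw [hEq w, hw]
    simp only [smul_eq_mul]
    ring
  rw [ordN, dif_pos hfA, hford, ordN, dif_pos hf₁, hn, ENat.toNat_coe, ENat.toNat_coe]

lemma ordN_mul_ne {f f₁ : ℂ → ℂ} {ζ w : ℂ} (hf₁ : AnalyticAt ℂ f₁ w) (hw : w ≠ ζ)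
    (hEq : ∀ z, f z = (z - ζ) * f₁ z) (hfin : analyticOrderAt f₁ w ≠ ⊤) :
    ordN f w = ordN f₁ w := by
  set n := (analyticOrderAt f₁ w).toNat with hndef
  have hn : analyticOrderAt f₁ w = (n : ℕ∞) := (ENat.coe_toNat hfin).symm
  obtain ⟨g, hg, hgne, hgev⟩ := (hf₁.analyticOrderAt_eq_natCast (n := n)).mp hn
  have hfA : AnalyticAt ℂ f w := analyticAt_of_eq hf₁ hEq
  have hford : analyticOrderAt f w = (n : ℕ∞) := by
    rw [hfA.analyticOrderAt_eq_natCast]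
    refine ⟨fun z => (z - ζ) * g z, (analyticAt_id.sub analyticAt_const).mul hg,
      mul_ne_zero (sub_ne_zero.2 hw) hgne, ?_⟩
    filter_upwards [hgev] with x hx
    rw [hEq x, hx]
    simp only [smul_eq_mul]
    ring
  rw [ordN, dif_pos hfA, hford, ordN, dif_pos hf₁, hn]

lemma zeros_finite {f : ℂ → ℂ} (hf : AnalyticOnNhd ℂ f (ball (0 : ℂ) 1)) {r : ℝ} (hr1 : r < 1)
    {z₀ : ℂ} (hz₀ : z₀ ∈ ball (0 : ℂ) 1) (hfz₀ : f z₀ ≠ 0) :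
    {z : ℂ | z ∈ closedBall (0 : ℂ) r ∧ f z = 0}.Finite := by
  by_contra hinf
  obtain ⟨x, hxK, hacc⟩ := Set.Infinite.exists_accPt_of_subset_isCompact hinf
    (isCompact_closedBall (0 : ℂ) r) (fun z hz => hz.1)
  rw [accPt_iff_frequently] at hacc
  have hx1 : x ∈ ball (0 : ℂ) 1 :=
    mem_ball.mpr (lt_of_le_of_lt (mem_closedBall.mp hxK) hr1)
  have hfreq : ∃ᶠ z in 𝓝[≠] x, f z = 0 := by
    rw [frequently_nhdsWithin_iff]
    exact hacc.mono fun y hy => ⟨hy.2.2, by simpa using hy.1⟩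
  exact hfz₀ (hf.eqOn_zero_of_preconnected_of_frequently_eq_zero
    (convex_ball (0:ℂ) 1).isPreconnected hx1 hfreq hz₀)




lemma peel_all {r : ℝ} (hr1 : r < 1) {z₀ : ℂ} (hz₀ : z₀ ∈ ball (0 : ℂ) 1) :
    ∀ (M : ℕ) (f : ℂ → ℂ), AnalyticOnNhd ℂ f (ball (0 : ℂ) 1) → f z₀ ≠ 0 →
    (∀ z ∈ ball (0 : ℂ) 1, f z = 0 → z ∈ closedBall (0 : ℂ) r) →
    (∀ hfin : {z : ℂ | z ∈ closedBall (0 : ℂ) r ∧ f z = 0}.Finite,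
        ∑ z ∈ hfin.toFinset, ordN f z ≤ M) →
    ∃ (n : ℕ) (ζ : Fin n → ℂ) (u : ℂ → ℂ), (∀ l, ζ l ∈ closedBall (0 : ℂ) r) ∧
      AnalyticOnNhd ℂ u (ball (0 : ℂ) 1) ∧ (∀ z ∈ ball (0 : ℂ) 1, u z ≠ 0) ∧
      ∀ z ∈ ball (0 : ℂ) 1, f z = u z * ∏ l, (z - ζ l) := by
  intro M
  induction M with
  | zero =>
    intro f hf hfz₀ hzin hsum
    have hfin := zeros_finite hf hr1 hz₀ hfz₀
    refine ⟨0, Fin.elim0, f, fun l => l.elim0, hf, fun z hz hzero => ?_, fun z hz => by simp⟩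
    -- no zeros : otherwise sum would be positive
    have hmem : z ∈ hfin.toFinset := by
      rw [Set.Finite.mem_toFinset]
      exact ⟨hzin z hz hzero, hzero⟩
    have h1 : 1 ≤ ordN f z :=
      ordN_pos (hf z hz) hzero (order_ne_top hf hz₀ hfz₀ hz)
    have h2 : ordN f z ≤ ∑ w ∈ hfin.toFinset, ordN f w :=
      Finset.single_le_sum (fun w _ => Nat.zero_le _) hmem
    have := hsum hfin
    omega
  | succ M ih =>
    intro f hf hfz₀ hzin hsum
    have hfin := zeros_finite hf hr1 hz₀ hfz₀
    by_cases hS : {z : ℂ | z ∈ closedBall (0 : ℂ) r ∧ f z = 0} = ∅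
    · refine ⟨0, Fin.elim0, f, fun l => l.elim0, hf, fun z hz hzero => ?_, fun z hz => by simp⟩
      have hm : z ∈ ({z : ℂ | z ∈ closedBall (0 : ℂ) r ∧ f z = 0}) := ⟨hzin z hz hzero, hzero⟩
      rw [hS] at hm
      simpa using hm
    · obtain ⟨ζ₀, hζ₀c, hfζ₀⟩ := Set.nonempty_iff_ne_empty.mpr hS
      have hζ₀b : ζ₀ ∈ ball (0 : ℂ) 1 :=
        mem_ball.mpr (lt_of_le_of_lt (mem_closedBall.mp hζ₀c) hr1)
      obtain ⟨f₁, hf₁, hEq⟩ := factor_out hf hζ₀b hfζ₀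
      have hf₁z₀ : f₁ z₀ ≠ 0 := by
        intro h
        apply hfz₀
        rw [hEq z₀, h, mul_zero]
      have hzin₁ : ∀ z ∈ ball (0 : ℂ) 1, f₁ z = 0 → z ∈ closedBall (0 : ℂ) r := by
        intro z hz h
        exact hzin z hz (by rw [hEq z, h, mul_zero])
      have hfin₁ := zeros_finite hf₁ hr1 hz₀ hf₁z₀
      have hsub : hfin₁.toFinset ⊆ hfin.toFinset := by
        intro z hz
        rw [Set.Finite.mem_toFinset] at hz ⊢
        exact ⟨hz.1, by rw [hEq z, hz.2, mul_zero]⟩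
      have hζ₀mem : ζ₀ ∈ hfin.toFinset := by
        rw [Set.Finite.mem_toFinset]; exact ⟨hζ₀c, hfζ₀⟩
      have hsum₁ : ∀ hfin' : {z : ℂ | z ∈ closedBall (0 : ℂ) r ∧ f₁ z = 0}.Finite,
          ∑ z ∈ hfin'.toFinset, ordN f₁ z ≤ M := by
        intro hfin'
        have htofs : hfin'.toFinset = hfin₁.toFinset := by
          ext w; simp only [Set.Finite.mem_toFinset]
        rw [htofs]
        -- key computation
        have hstep : ∀ z ∈ hfin.toFinset,
            ordN f z = ordN f₁ z + (if z = ζ₀ then 1 else 0) := by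
          intro z hz
          have hzb : z ∈ ball (0 : ℂ) 1 :=
            mem_ball.mpr (lt_of_le_of_lt (mem_closedBall.mp
              ((Set.Finite.mem_toFinset hfin).mp hz).1) hr1)
          have hord := order_ne_top hf₁ hz₀ hf₁z₀ hzb
          rcases eq_or_ne z ζ₀ with rfl | hne
          · rw [if_pos rfl]
            exact ordN_mul_self (hf₁ z hzb) hEq hord
          · rw [if_neg hne, ordN_mul_ne (hf₁ z hzb) hne hEq hord, Nat.add_zero]
        have hsumf : ∑ z ∈ hfin.toFinset, ordN f z
            = (∑ z ∈ hfin.toFinset, ordN f₁ z) + 1 := by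
          rw [Finset.sum_congr rfl hstep, Finset.sum_add_distrib]
          congr 1
          rw [Finset.sum_ite_eq' hfin.toFinset ζ₀ (fun _ => 1)]
          rw [if_pos hζ₀mem]
        have hsub2 : ∑ z ∈ hfin₁.toFinset, ordN f₁ z ≤ ∑ z ∈ hfin.toFinset, ordN f₁ z := by
          apply Finset.sum_le_sum_of_subset hsub
        have := hsum hfin
        omega
      obtain ⟨n, ζ, u, hζmem, hu, hune, hEqOn⟩ := ih f₁ hf₁ hf₁z₀ hzin₁ hsum₁
      refine ⟨n + 1, Fin.cons ζ₀ ζ, u, ?_, hu, hune, ?_⟩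
      · intro l
        refine Fin.cases ?_ ?_ l
        · simpa using hζ₀c
        · intro i; simpa using hζmem i
      · intro z hz
        rw [hEq z, hEqOn z hz, Fin.prod_univ_succ]
        simp only [Fin.cons_zero, Fin.cons_succ]
        ring



lemma circleInt_add {f g : ℂ → ℂ} {c : ℂ} {R : ℝ} (hf : CircleIntegrable f c R)
    (hg : CircleIntegrable g c R) :
    (∮ z in C(c, R), (f z + g z)) = (∮ z in C(c, R), f z) + (∮ z in C(c, R), g z) := by
  simp only [circleIntegral, smul_add]
  exact intervalIntegral.integral_add hf.out hg.out

lemma sphere_sub_ball {r' : ℝ} (hr'1 : r' < 1) :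
    sphere (0 : ℂ) r' ⊆ ball (0 : ℂ) 1 := fun z hz => by
  rw [mem_sphere_zero_iff_norm] at hz
  rw [mem_ball_zero_iff, hz]
  exact hr'1

lemma closedBall_sub_ball {r' : ℝ} (hr'1 : r' < 1) :
    closedBall (0 : ℂ) r' ⊆ ball (0 : ℂ) 1 := fun z hz => by
  rw [mem_closedBall_zero_iff] at hz
  rw [mem_ball_zero_iff]
  exact lt_of_le_of_lt hz hr'1

lemma Wstep {r' : ℝ} (hr'0 : 0 < r') (hr'1 : r' < 1) {Q : ℂ → ℂ}
    (hQ : AnalyticOnNhd ℂ Q (ball (0 : ℂ) 1)) (hQne : ∀ z ∈ sphere (0 : ℂ) r', Q z ≠ 0)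
    {ζ₀ : ℂ} (hζ₀ : ζ₀ ∈ ball (0 : ℂ) r') :
    (∮ z in C(0, r'), deriv (fun w => Q w * (w - ζ₀)) z / (Q z * (z - ζ₀)))
      = (∮ z in C(0, r'), deriv Q z / Q z) + 2 * Real.pi * I := by
  have hsub := sphere_sub_ball hr'1
  have hzne : ∀ z ∈ sphere (0 : ℂ) r', z - ζ₀ ≠ 0 := by
    intro z hz
    rw [mem_sphere_zero_iff_norm] at hz
    rw [mem_ball_zero_iff] at hζ₀
    intro h
    rw [sub_eq_zero] at h
    rw [h] at hz
    exact absurd hz (ne_of_lt hζ₀)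
  have key : EqOn (fun z => deriv (fun w => Q w * (w - ζ₀)) z / (Q z * (z - ζ₀)))
      (fun z => deriv Q z / Q z + (z - ζ₀)⁻¹) (sphere (0 : ℂ) r') := by
    intro z hz
    have hz1 : z ∈ ball (0 : ℂ) 1 := hsub hz
    have hQd : HasDerivAt Q (deriv Q z) z := ((hQ z hz1).differentiableAt).hasDerivAt
    have hd : HasDerivAt (fun w => Q w * (w - ζ₀)) (deriv Q z * (z - ζ₀) + Q z * 1) z :=
      hQd.mul ((hasDerivAt_id z).sub_const ζ₀)
    simp only
    rw [hd.deriv]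
    have h1 : Q z ≠ 0 := hQne z hz
    have h2 : z - ζ₀ ≠ 0 := hzne z hz
    field_simp
  rw [circleIntegral.integral_congr hr'0.le key]
  have int1 : CircleIntegrable (fun z => deriv Q z / Q z) 0 r' := by
    apply ContinuousOn.circleIntegrable hr'0.le
    exact ((hQ.deriv.continuousOn.mono hsub)).div (hQ.continuousOn.mono hsub) hQne
  have int2 : CircleIntegrable (fun z => (z - ζ₀)⁻¹) 0 r' := by
    apply ContinuousOn.circleIntegrable hr'0.le
    exact ((continuous_id.sub continuous_const).continuousOn).inv₀ hzne
  rw [circleInt_add int1 int2, circleIntegral.integral_sub_inv_of_mem_ball hζ₀]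

lemma Wfact {r' : ℝ} (hr'0 : 0 < r') (hr'1 : r' < 1) :
    ∀ (n : ℕ) (ζ : Fin n → ℂ), (∀ l, ζ l ∈ ball (0 : ℂ) r') →
    ∀ (u : ℂ → ℂ), AnalyticOnNhd ℂ u (ball (0 : ℂ) 1) → (∀ z ∈ ball (0 : ℂ) 1, u z ≠ 0) →
    (∮ z in C(0, r'), deriv (fun w => u w * ∏ l, (w - ζ l)) z / (u z * ∏ l, (z - ζ l)))
      = (n : ℂ) * (2 * Real.pi * I) := by
  intro n
  induction n with
  | zero =>
    intro ζ _ u hu hune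
    have hfun : (fun w => u w * ∏ l : Fin 0, (w - ζ l)) = u := by
      funext w; simp
    rw [hfun]
    have hcong : EqOn (fun z => deriv u z / (u z * ∏ l : Fin 0, (z - ζ l)))
        (fun z => deriv u z / u z) (sphere (0 : ℂ) r') := by
      intro z _; simp
    rw [circleIntegral.integral_congr hr'0.le hcong]
    have h0 : (∮ z in C(0, r'), deriv u z / u z) = 0 := by
      apply Complex.circleIntegral_eq_zero_of_differentiable_on_off_countable hr'0.le
        Set.countable_empty
      · exact ((hu.deriv.continuousOn.mono (closedBall_sub_ball hr'1))).div
          (hu.continuousOn.mono (closedBall_sub_ball hr'1))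
          (fun z hz => hune z (closedBall_sub_ball hr'1 hz))
      · intro z hz
        have hz1 : z ∈ ball (0 : ℂ) 1 :=
          closedBall_sub_ball hr'1 (ball_subset_closedBall hz.1)
        exact ((hu.deriv z hz1).differentiableAt).div ((hu z hz1).differentiableAt)
          (hune z hz1)
    rw [h0]
    simp
  | succ n ihn =>
    intro ζ hζ u hu hune
    have hfun : (fun w => u w * ∏ l : Fin (n + 1), (w - ζ l))
        = fun w => (u w * ∏ l : Fin n, (w - ζ l.castSucc)) * (w - ζ (Fin.last n)) := by
      funext w
      rw [Fin.prod_univ_castSucc]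
      ring
    have hQ : AnalyticOnNhd ℂ (fun w => u w * ∏ l : Fin n, (w - ζ l.castSucc))
        (ball (0 : ℂ) 1) := by
      apply hu.mul
      apply Finset.analyticOnNhd_fun_prod
      intro l _
      exact analyticOnNhd_id.sub analyticOnNhd_const
    have hQne : ∀ z ∈ sphere (0 : ℂ) r', u z * ∏ l : Fin n, (z - ζ l.castSucc) ≠ 0 := by
      intro z hz
      apply mul_ne_zero (hune z (sphere_sub_ball hr'1 hz))
      rw [Finset.prod_ne_zero_iff]
      intro l _
      rw [mem_sphere_zero_iff_norm] at hz
      intro h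
      rw [sub_eq_zero] at h
      have := hζ l.castSucc
      rw [mem_ball_zero_iff, ← h, hz] at this
      exact absurd this (lt_irrefl _)
    have hcong : EqOn
        (fun z => deriv (fun w => u w * ∏ l : Fin (n + 1), (w - ζ l)) z
          / (u z * ∏ l : Fin (n + 1), (z - ζ l)))
        (fun z => deriv (fun w => (u w * ∏ l : Fin n, (w - ζ l.castSucc))
            * (w - ζ (Fin.last n))) z
          / ((u z * ∏ l : Fin n, (z - ζ l.castSucc)) * (z - ζ (Fin.last n))))
        (sphere (0 : ℂ) r') := by
      intro z _
      simp only
      rw [hfun, congrFun hfun z]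
    rw [circleIntegral.integral_congr hr'0.le hcong]
    rw [Wstep hr'0 hr'1 hQ hQne (hζ (Fin.last n))]
    rw [ihn (fun l => ζ l.castSucc) (fun l => hζ l.castSucc) u hu hune]
    push_cast
    ring


lemma keyMain (K : ℕ) (hK : 1 ≤ K) (e : ℕ → ℝ) (he : Summable e) (hpos : ∀ m, 0 ≤ e m)
    (τ : ℝ) (hτ : (∑' m, e m) < τ) :
    (∀ z : ℂ, ‖z‖ = 1 → (∑' m, (e m : ℂ) * z ^ m) - (τ : ℂ) * z ^ K ≠ 0)
    ∧ ∃ ζ : Fin K → ℂ, (∀ l, ‖ζ l‖ < 1) ∧ ∃ u : ℂ → ℂ,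
        AnalyticOnNhd ℂ u (ball (0 : ℂ) 1) ∧ (∀ z ∈ ball (0 : ℂ) 1, u z ≠ 0) ∧
        ∀ z ∈ ball (0 : ℂ) 1, (∑' m, (e m : ℂ) * z ^ m) - (τ : ℂ) * z ^ K
            = u z * ∏ l, (z - ζ l) := by
  obtain ⟨mK, rfl⟩ : ∃ m, K = m + 1 := ⟨K - 1, (Nat.succ_pred_eq_of_pos hK).symm⟩
  set K := mK + 1 with hKdef
  set G : ℂ → ℂ := fun z => ∑' m, (e m : ℂ) * z ^ m with hGdef
  set f : ℂ → ℂ := fun z => G z - (τ : ℂ) * z ^ K with hfdef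
  set s : ℝ := ∑' m, e m with hsdef
  have hs0 : 0 ≤ s := tsum_nonneg hpos
  have hτ0 : 0 < τ := lt_of_le_of_lt hs0 hτ
  set q : ℝ := (s + τ) / (2 * τ) with hqdef
  have hq0 : 0 < q := div_pos (by linarith) (by linarith)
  have hq1 : q < 1 := by rw [hqdef, div_lt_one (by linarith)]; linarith
  set r : ℝ := q ^ ((K : ℝ)⁻¹) with hrdef
  have hr0 : 0 < r := Real.rpow_pos_of_pos hq0 _
  have hr1 : r < 1 := Real.rpow_lt_one hq0.le hq1 (by positivity)
  have hrK : r ^ K = q := by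
    rw [hrdef, ← Real.rpow_natCast (q ^ ((K : ℝ)⁻¹)) K, ← Real.rpow_mul hq0.le,
      inv_mul_cancel₀ (by positivity), Real.rpow_one]
  have hsrK : s < τ * r ^ K := by
    have hτq : τ * q = (s + τ) / 2 := by
      rw [hqdef]; field_simp
    rw [hrK, hτq]; linarith
  have hGb : ∀ z : ℂ, ‖z‖ ≤ 1 → ‖G z‖ ≤ s := fun z hz => norm_G_le he hpos hz
  have hfz : ∀ z : ℂ, r ≤ ‖z‖ → ‖z‖ ≤ 1 → f z ≠ 0 := by
    intro z h1 h2 h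
    have hGz : G z = (τ : ℂ) * z ^ K := sub_eq_zero.mp h
    have h3 : ‖(τ : ℂ) * z ^ K‖ = τ * ‖z‖ ^ K := by
      rw [norm_mul, norm_pow, Complex.norm_real, Real.norm_eq_abs, _root_.abs_of_pos hτ0]
    have h4 : τ * r ^ K ≤ τ * ‖z‖ ^ K :=
      mul_le_mul_of_nonneg_left (pow_le_pow_left₀ hr0.le h1 K) hτ0.le
    have h5 : ‖G z‖ ≤ s := hGb z h2
    rw [hGz, h3] at h5
    linarith
  have part1 : ∀ z : ℂ, ‖z‖ = 1 → f z ≠ 0 := fun z hz =>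
    hfz z (by rw [hz]; exact hr1.le) hz.le
  have hG : AnalyticOnNhd ℂ G (ball (0 : ℂ) 1) := analyticG he
  have hf : AnalyticOnNhd ℂ f (ball (0 : ℂ) 1) :=
    hG.sub (analyticOnNhd_const.mul (analyticOnNhd_id.pow K))
  set r' : ℝ := (r + 1) / 2 with hr'def
  have hr'0 : 0 < r' := by rw [hr'def]; linarith
  have hrr' : r < r' := by rw [hr'def]; linarith
  have hr'1 : r' < 1 := by rw [hr'def]; linarith
  set z₀ : ℂ := ((r' : ℝ) : ℂ) with hz₀def
  have hz₀n : ‖z₀‖ = r' := by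
    rw [hz₀def, Complex.norm_real, Real.norm_eq_abs, _root_.abs_of_pos hr'0]
  have hz₀b : z₀ ∈ ball (0 : ℂ) 1 := by rw [mem_ball_zero_iff, hz₀n]; exact hr'1
  have hfz₀ : f z₀ ≠ 0 := hfz z₀ (by rw [hz₀n]; exact hrr'.le) (by rw [hz₀n]; exact hr'1.le)
  have hzin : ∀ z ∈ ball (0 : ℂ) 1, f z = 0 → z ∈ closedBall (0 : ℂ) r := by
    intro z hz h
    rw [mem_closedBall_zero_iff]
    by_contra hc
    push_neg at hc
    exact hfz z hc.le (le_of_lt (mem_ball_zero_iff.mp hz)) h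
  have hfin := zeros_finite hf hr1 hz₀b hfz₀
  obtain ⟨n, ζ, u, hζmem, hu, hune, hEqOn⟩ :=
    peel_all hr1 hz₀b (∑ z ∈ hfin.toFinset, ordN f z) f hf hfz₀ hzin (by
      intro hfin'
      have heq : hfin'.toFinset = hfin.toFinset := by
        ext w; simp only [Set.Finite.mem_toFinset]
      rw [heq])
  have hζb : ∀ l, ζ l ∈ ball (0 : ℂ) r' := fun l => by
    have := mem_closedBall_zero_iff.mp (hζmem l)
    rw [mem_ball_zero_iff]; linarith
  have EqA : (∮ z in C(0, r'), deriv f z / f z) = (n : ℂ) * (2 * Real.pi * I) := by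
    have hcong : EqOn (fun z => deriv f z / f z)
        (fun z => deriv (fun w => u w * ∏ l, (w - ζ l)) z / (u z * ∏ l, (z - ζ l)))
        (sphere (0 : ℂ) r') := by
      intro z hz
      have hz1 : z ∈ ball (0 : ℂ) 1 := sphere_sub_ball hr'1 hz
      have hev : f =ᶠ[nhds z] (fun w => u w * ∏ l, (w - ζ l)) :=
        Filter.eventuallyEq_of_mem (isOpen_ball.mem_nhds hz1) hEqOn
      simp only
      rw [hev.deriv_eq, hEqOn z hz1]
    rw [circleIntegral.integral_congr hr'0.le hcong]
    exact Wfact hr'0 hr'1 n ζ hζb u hu hune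
  have EqB : (∮ z in C(0, r'), deriv f z / f z) = (K : ℂ) * (2 * Real.pi * I) := by
    set v : ℂ → ℂ := fun z => (τ : ℂ) - G z / z ^ K with hvdef
    have hvan : ∀ z : ℂ, z ≠ 0 → f z = -(z ^ K * v z) := by
      intro z hz
      simp only [hvdef, hfdef]
      field_simp
      ring
    have hvRe : ∀ z : ℂ, r ≤ ‖z‖ → ‖z‖ ≤ 1 → 0 < (v z).re := by
      intro z h1 h2
      have hrKz : r ^ K ≤ ‖z‖ ^ K := pow_le_pow_left₀ hr0.le h1 K
      have hnorm : ‖G z / z ^ K‖ ≤ s / r ^ K := by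
        rw [norm_div, norm_pow]
        exact div_le_div₀ hs0 (hGb z h2) (pow_pos hr0 K) hrKz
      have hlt : s / r ^ K < τ := by
        rw [div_lt_iff₀ (pow_pos hr0 K)]
        linarith
      have hre : (G z / z ^ K).re ≤ ‖G z / z ^ K‖ :=
        (Complex.re_le_norm _)
      simp only [hvdef, Complex.sub_re, Complex.ofReal_re]
      linarith
    have hvne : ∀ z : ℂ, r ≤ ‖z‖ → ‖z‖ ≤ 1 → v z ≠ 0 := by
      intro z h1 h2 h
      have := hvRe z h1 h2
      rw [h] at this
      simp at this
    set O : Set ℂ := ball (0 : ℂ) 1 \ {(0 : ℂ)} with hOdef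
    have hvO : AnalyticOnNhd ℂ v O := by
      apply analyticOnNhd_const.sub
      apply AnalyticOnNhd.div (hG.mono Set.diff_subset) ((analyticOnNhd_id.pow K))
      intro z hz
      exact pow_ne_zero K (by simpa using hz.2)
    have hsphereO : sphere (0 : ℂ) r' ⊆ O := by
      intro z hz
      rw [mem_sphere_zero_iff_norm] at hz
      constructor
      · rw [mem_ball_zero_iff, hz]; exact hr'1
      · simp only [mem_singleton_iff]
        intro h
        rw [h] at hz
        simp only [norm_zero] at hz
        linarith
    have hsphn : ∀ z ∈ sphere (0 : ℂ) r', r ≤ ‖z‖ ∧ ‖z‖ ≤ 1 ∧ z ≠ 0 := by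
      intro z hz
      rw [mem_sphere_zero_iff_norm] at hz
      refine ⟨by rw [hz]; exact hrr'.le, by rw [hz]; exact hr'1.le, ?_⟩
      intro h
      rw [h] at hz
      simp only [norm_zero] at hz
      linarith
    have hlog0 : (∮ z in C(0, r'), deriv v z / v z) = 0 := by
      apply circleIntegral.integral_eq_zero_of_hasDerivWithinAt hr'0.le
        (f := fun w => Complex.log (v w))
      intro z hz
      obtain ⟨hzr, hz1, hz0⟩ := hsphn z hz
      have hvd : DifferentiableAt ℂ v z := (hvO z (hsphereO hz)).differentiableAt
      have hslit : v z ∈ Complex.slitPlane :=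
        Complex.mem_slitPlane_iff.mpr (Or.inl (hvRe z hzr hz1))
      exact (hvd.hasDerivAt.clog hslit).hasDerivWithinAt
    have hKpt : EqOn (fun z => deriv f z / f z)
        (fun z => (K : ℂ) * z⁻¹ + deriv v z / v z) (sphere (0 : ℂ) r') := by
      intro z hz
      obtain ⟨hzr, hz1, hz0⟩ := hsphn z hz
      have hvd : DifferentiableAt ℂ v z := (hvO z (hsphereO hz)).differentiableAt
      have h1 : HasDerivAt (fun w => -(w ^ K * v w))
          (-(((K : ℕ) : ℂ) * z ^ (K - 1) * v z + z ^ K * deriv v z)) z :=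
        ((hasDerivAt_pow K z).mul hvd.hasDerivAt).neg
      have hfd : HasDerivAt f
          (-(((K : ℕ) : ℂ) * z ^ (K - 1) * v z + z ^ K * deriv v z)) z := by
        apply h1.congr_of_eventuallyEq
        filter_upwards [eventually_ne_nhds hz0] with w hw
        exact hvan w hw
      simp only
      rw [hfd.deriv, hvan z hz0]
      have hvz : v z ≠ 0 := hvne z hzr hz1
      simp only [hKdef, Nat.add_sub_cancel]
      field_simp
      ring
    rw [circleIntegral.integral_congr hr'0.le hKpt]
    have intK : CircleIntegrable (fun z => (K : ℂ) * z⁻¹) 0 r' := by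
      apply ContinuousOn.circleIntegrable hr'0.le
      apply continuousOn_const.mul
      apply ContinuousOn.inv₀ continuousOn_id
      intro z hz
      exact (hsphn z hz).2.2
    have intV : CircleIntegrable (fun z => deriv v z / v z) 0 r' := by
      apply ContinuousOn.circleIntegrable hr'0.le
      exact ((hvO.deriv.continuousOn.mono hsphereO)).div (hvO.continuousOn.mono hsphereO)
        (fun z hz => hvne z (hsphn z hz).1 (hsphn z hz).2.1)
    rw [circleInt_add intK intV, hlog0, add_zero, circleIntegral.integral_const_mul]
    have hint : (∮ z in C(0, r'), z⁻¹) = 2 * Real.pi * I := by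
      have h := circleIntegral.integral_sub_center_inv (0 : ℂ) (ne_of_gt hr'0)
      simpa using h
    rw [hint]
  have hnK : n = K := by
    have h2πI : (2 * (Real.pi : ℂ) * I) ≠ 0 := by
      simp [Real.pi_ne_zero, Complex.I_ne_zero, Complex.ofReal_ne_zero]
    have hc : (n : ℂ) = (K : ℂ) := mul_right_cancel₀ h2πI (EqA.symm.trans EqB)
    exact_mod_cast hc
  subst hnK
  exact ⟨part1, ζ, fun l => lt_of_le_of_lt (mem_closedBall_zero_iff.mp (hζmem l)) hr1,
    u, hu, hune, hEqOn⟩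

end Stmt8Aux

/-- Under the symmetric Assumption 2.1(i)–(ii), for `η ∈ [-1,1]` the function `φ` has no
zeros on the unit circle and exactly `K` zeros in the open unit disc, counted with
multiplicity. -/
theorem stmt8 (c K : ℕ) (hc : 1 ≤ c) (hK : 1 ≤ K) (a b cc d : ℕ → ℝ)
    (nna : ∀ m, 0 ≤ a m) (nnb : ∀ m, 0 ≤ b m)
    (nnc : ∀ m, 0 ≤ cc m) (nnd : ∀ m, 0 ≤ d m)
    (suma : Summable a) (sumb : Summable b) (sumc : Summable cc) (sumd : Summable d)
    (posA : 0 < Gone a) (posD : 0 < Gone d)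
    (η : ℝ) (hη : η ∈ Set.Icc (-1 : ℝ) 1) :
    (∀ z : ℂ, ‖z‖ = 1 → phi K a b cc d η z ≠ 0)
    ∧ ∃ ζ : Fin K → ℂ, (∀ l, ‖ζ l‖ < 1)
        ∧ ∃ u : ℂ → ℂ, AnalyticOnNhd ℂ u (Metric.ball (0 : ℂ) 1)
          ∧ (∀ z ∈ Metric.ball (0 : ℂ) 1, u z ≠ 0)
          ∧ ∀ z ∈ Metric.ball (0 : ℂ) 1,
              phi K a b cc d η z = u z * ∏ l : Fin K, (z - ζ l) := by
  have h1 : (0:ℝ) ≤ 1 - η := by linarith [hη.2]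
  have h2 : (0:ℝ) ≤ 1 + η := by linarith [hη.1]
  set e : ℕ → ℝ := fun m => b m * (1 - η) + cc m * (1 + η) with hedef
  have he : Summable e := (sumb.mul_right _).add (sumc.mul_right _)
  have hpos : ∀ m, 0 ≤ e m := fun m =>
    add_nonneg (mul_nonneg (nnb m) h1) (mul_nonneg (nnc m) h2)
  have hsum_eq : ∑' m, e m = Gone b * (1 - η) + Gone cc * (1 + η) := by
    rw [hedef]
    rw [Summable.tsum_add (sumb.mul_right _) (sumc.mul_right _), tsum_mul_right, tsum_mul_right]
    rfl
  have hpos2 : 0 < Gone a * (1 - η) + Gone d * (1 + η) := by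
    rcases lt_or_eq_of_le hη.2 with hlt | heq
    · have ha := mul_pos posA (by linarith : (0:ℝ) < 1 - η)
      have hd := mul_nonneg posD.le h2
      linarith
    · subst heq
      norm_num
      linarith [posD]
  have hτgt : (∑' m, e m) < tau1 a b cc d η := by
    rw [hsum_eq]
    unfold tau1
    nlinarith [hpos2]
  have hphi : ∀ z : ℂ, ‖z‖ ≤ 1 → phi K a b cc d η z
      = (∑' m, (e m : ℂ) * z ^ m) - ((tau1 a b cc d η : ℝ) : ℂ) * z ^ K := by
    intro z hz
    have h1s : Summable (fun m => ((b m : ℂ)) * z ^ m) := Stmt8Aux.summable_coef sumb hz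
    have h2s : Summable (fun m => ((cc m : ℂ)) * z ^ m) := Stmt8Aux.summable_coef sumc hz
    have hsum : GC b z * ((1 - η : ℝ) : ℂ) + GC cc z * ((1 + η : ℝ) : ℂ)
        = ∑' m, (e m : ℂ) * z ^ m := by
      unfold GC
      rw [← tsum_mul_right, ← tsum_mul_right,
        ← Summable.tsum_add (h1s.mul_right _) (h2s.mul_right _)]
      apply tsum_congr
      intro m
      rw [hedef]
      push_cast
      ring
    unfold phi
    rw [hsum]
    ring
  obtain ⟨p1, ζ, hζ, u, hu, hune, heqf⟩ :=
    Stmt8Aux.keyMain K hK e he hpos (tau1 a b cc d η) hτgt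
  constructor
  · intro z hz
    have hn : ‖z‖ = 1 := by rw [hz]
    rw [hphi z hn.le]
    exact p1 z hn
  · refine ⟨ζ, fun l => by have := hζ l; exact this, u, hu, hune, ?_⟩
    intro z hz
    rw [hphi z (le_of_lt (mem_ball_zero_iff.mp hz))]
    exact heqf z hz
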